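/- Let $p \in [1,\infty]$, $T > 0$, and let $z : (0,T) \to L^p(\mathbb{T}^d)$ satisfy $z \in L^2(0,T; L^p)$ and $t \mapsto \sqrt{t}\, z_t(t) \in L^2(0,T; L^p)$. Then for every $\alpha \in (0, 1/2)$, $z \in H^{1/2 - \alpha}(0,T; L^p)$, with $\|z\|_{H^{1/2-\alpha}(0,T;L^p)}^2 \leq \|z\|_{L^2(0,T;L^p)}^2 + C_{\alpha,T}\, \|\sqrt{t}\, z_t\|_{L^2(0,T;L^p)}^2$ for a constant $C_{\alpha,T}$ depending only on $\alpha$ and $T$. -/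

import Mathlib

open MeasureTheory Set ENNReal


lemma logBound {β x : ℝ} (hβ0 : 0 < β) (hβ1 : β ≤ 1) (hx : 0 < x) :
    Real.log (1 + x) ≤ 2 / β * x ^ β := by
  have hxβ : (0:ℝ) ≤ x ^ β := Real.rpow_nonneg hx.le _
  rcases le_total x 1 with hx1 | hx1
  · have h1 : Real.log (1 + x) ≤ x := by
      have := Real.log_le_sub_one_of_pos (show (0:ℝ) < 1 + x by linarith)
      linarith
    have h2 : x ^ (1:ℝ) ≤ x ^ β := Real.rpow_le_rpow_of_exponent_ge hx hx1 hβ1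
    rw [Real.rpow_one] at h2
    have h3 : (1:ℝ) ≤ 2 / β := by
      rw [le_div_iff₀ hβ0]; linarith
    nlinarith
  · have h1 : Real.log (1 + x) ≤ Real.log (2 * x) :=
      Real.log_le_log (by linarith) (by linarith)
    rw [Real.log_mul (by norm_num) (by linarith)] at h1
    have h2 : Real.log 2 ≤ 1 := by
      have := Real.log_le_sub_one_of_pos (show (0:ℝ) < 2 by norm_num); linarith
    have h3 : Real.log x ≤ x ^ β / β := Real.log_le_rpow_div hx.le hβ0
    have h4 : (1:ℝ) ≤ x ^ β := by
      have := Real.rpow_le_rpow (by norm_num : (0:ℝ) ≤ 1) hx1 hβ0.le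
      rwa [Real.one_rpow] at this
    have h5 : x ^ β / β ≤ x ^ β / β := le_refl _
    have h6 : (0:ℝ) < β⁻¹ := by positivity
    have : Real.log 2 + Real.log x ≤ x ^ β + x ^ β / β := by linarith
    calc Real.log (1 + x) ≤ x ^ β + x ^ β / β := by linarith
    _ ≤ 2 / β * x ^ β := by
        rw [div_mul_eq_mul_div, two_mul, add_div]
        gcongr
        rw [le_div_iff₀ hβ0]
        nlinarith

lemma lintAux {b c r : ℝ} (hb : 0 < b) (hc : 0 ≤ c) (hr : -1 < r) :
    ∫⁻ t in Ioo (0:ℝ) b, ENNReal.ofReal (c * t ^ r)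
      = ENNReal.ofReal (c * (b ^ (r + 1) / (r + 1))) := by
  have hr1 : (0:ℝ) < r + 1 := by linarith
  have hint : IntegrableOn (fun t : ℝ => c * t ^ r) (Ioo 0 b) := by
    have h1 : IntervalIntegrable (fun t : ℝ => t ^ r) volume 0 b :=
      intervalIntegral.intervalIntegrable_rpow' hr
    have h2 : IntegrableOn (fun t : ℝ => t ^ r) (Ioc 0 b) := by
      rwa [intervalIntegrable_iff_integrableOn_Ioc_of_le hb.le] at h1
    exact (h2.mono_set Ioo_subset_Ioc_self).const_mul c
  rw [← ofReal_integral_eq_lintegral_ofReal hint]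
  · congr 1
    rw [integral_const_mul]
    congr 1
    rw [← MeasureTheory.integral_Ioc_eq_integral_Ioo,
      ← intervalIntegral.integral_of_le hb.le,
      integral_rpow (Or.inl hr)]
    rw [Real.zero_rpow (by linarith)]
    ring
  · filter_upwards [ae_restrict_mem measurableSet_Ioo] with t ht
    exact mul_nonneg hc (Real.rpow_nonneg ht.1.le _)


lemma diffBound {E : Type} [NormedAddCommGroup E] [NormedSpace ℝ E] [CompleteSpace E]
    {T : ℝ} {z z' : ℝ → E} (hz : ∀ s ∈ Ioo (0:ℝ) T, HasDerivAt z (z' s) s)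
    (hz2 : IntegrableOn (fun s => s * ‖z' s‖ ^ 2) (Ioo 0 T))
    {t h : ℝ} (ht : 0 < t) (hh : 0 < h) (hth : t + h < T) :
    ‖z (t + h) - z t‖ ^ 2
      ≤ (∫ s in Ioo (0:ℝ) T, s * ‖z' s‖ ^ 2) * Real.log ((t + h) / t) := by
  set K := ∫ s in Ioo (0:ℝ) T, s * ‖z' s‖ ^ 2 with hK
  set L := Real.log ((t + h) / t) with hLdef
  have hL0 : 0 ≤ L := Real.log_nonneg ((one_le_div ht).2 (by linarith))
  have hsub : Ioc t (t + h) ⊆ Ioo 0 T := fun s hs =>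
    ⟨lt_trans ht hs.1, lt_of_le_of_lt hs.2 hth⟩
  set μ' := volume.restrict (Ioc t (t + h)) with hμ'
  -- measurability of z' on the interval
  have hmeas : AEStronglyMeasurable z' μ' := by
    refine (stronglyMeasurable_deriv z).aestronglyMeasurable.congr ?_
    refine (ae_restrict_iff' measurableSet_Ioc).2 (ae_of_all _ fun s hs => ?_)
    exact (hz s (hsub hs)).deriv
  have hintloc : IntegrableOn (fun s => s * ‖z' s‖ ^ 2) (Ioc t (t + h)) :=
    hz2.mono_set hsub
  -- z' is integrable on the interval
  have hz'int : IntegrableOn z' (Ioc t (t + h)) := by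
    refine Integrable.mono' ((integrable_const (1:ℝ)).add (hintloc.const_mul t⁻¹))
      hmeas ?_
    refine (ae_restrict_iff' measurableSet_Ioc).2 (ae_of_all _ fun s hs => ?_)
    have h2 : (1:ℝ) ≤ s / t := (one_le_div ht).2 hs.1.le
    have h3 : ‖z' s‖ ^ 2 ≤ s / t * ‖z' s‖ ^ 2 := le_mul_of_one_le_left (sq_nonneg _) h2
    have e : t⁻¹ * (s * ‖z' s‖ ^ 2) = s / t * ‖z' s‖ ^ 2 := by ring
    have h1 : ‖z' s‖ ≤ 1 + ‖z' s‖ ^ 2 := by nlinarith [sq_nonneg (‖z' s‖ - 1)]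
    simp only [Pi.add_apply]
    linarith
  -- FTC
  have heq : ∫ s in t..(t + h), z' s = z (t + h) - z t := by
    refine intervalIntegral.integral_eq_sub_of_hasDerivAt (fun s hs => ?_) ?_
    · rw [uIcc_of_le (by linarith)] at hs
      exact hz s ⟨lt_of_lt_of_le ht hs.1, lt_of_le_of_lt hs.2 hth⟩
    · rwa [intervalIntegrable_iff_integrableOn_Ioc_of_le (by linarith)]
  have hnorm : ‖z (t + h) - z t‖ ≤ ∫ s in Ioc t (t + h), ‖z' s‖ := by
    rw [← heq, ← intervalIntegral.integral_of_le (by linarith : t ≤ t + h)]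
    exact intervalIntegral.norm_integral_le_integral_norm (by linarith)
  -- Hölder
  set f := fun s : ℝ => Real.sqrt s * ‖z' s‖ with hf
  set g := fun s : ℝ => (Real.sqrt s)⁻¹ with hg
  have hf_meas : AEStronglyMeasurable f μ' :=
    Real.continuous_sqrt.aestronglyMeasurable.mul hmeas.norm
  have hg_meas : AEStronglyMeasurable g μ' :=
    (Real.continuous_sqrt.measurable.inv).aestronglyMeasurable
  have hf2 : Integrable (fun s => f s ^ 2) μ' := by
    refine hintloc.congr ?_
    refine (ae_restrict_iff' measurableSet_Ioc).2 (ae_of_all _ fun s hs => ?_)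
    have hs0 : (0:ℝ) ≤ s := (lt_trans ht hs.1).le
    simp only [hf, mul_pow, Real.sq_sqrt hs0]
  have hg2 : Integrable (fun s => g s ^ 2) μ' := by
    refine Integrable.mono' (integrable_const t⁻¹)
      ((Real.continuous_sqrt.measurable.inv.pow_const 2).aestronglyMeasurable) ?_
    refine (ae_restrict_iff' measurableSet_Ioc).2 (ae_of_all _ fun s hs => ?_)
    have hs0 : (0:ℝ) < s := lt_trans ht hs.1
    have e : g s ^ 2 = s⁻¹ := by
      show (Real.sqrt s)⁻¹ ^ 2 = s⁻¹
      rw [← Real.sqrt_inv, Real.sq_sqrt (by positivity)]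
    rw [Real.norm_of_nonneg (by positivity), e]
    exact inv_anti₀ ht hs.1.le
  have hfLp : MemLp f (ENNReal.ofReal 2) μ' := by
    rw [show ENNReal.ofReal (2:ℝ) = 2 by norm_num]
    exact (memLp_two_iff_integrable_sq hf_meas).2 hf2
  have hgLp : MemLp g (ENNReal.ofReal 2) μ' := by
    rw [show ENNReal.ofReal (2:ℝ) = 2 by norm_num]
    exact (memLp_two_iff_integrable_sq hg_meas).2 hg2
  have hconj : Real.HolderConjugate 2 2 := ⟨by norm_num, by norm_num, by norm_num⟩
  have hf_nn : 0 ≤ᵐ[μ'] f :=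
    ae_of_all _ fun s => mul_nonneg (Real.sqrt_nonneg _) (norm_nonneg _)
  have hg_nn : 0 ≤ᵐ[μ'] g := ae_of_all _ fun s => by positivity
  have holder := integral_mul_le_Lp_mul_Lq_of_nonneg hconj hf_nn hg_nn hfLp hgLp
  -- identify the three integrals
  have hfg : ∫ s, f s * g s ∂μ' = ∫ s in Ioc t (t + h), ‖z' s‖ := by
    refine setIntegral_congr_fun measurableSet_Ioc fun s hs => ?_
    have hs0 : (0:ℝ) < s := lt_trans ht hs.1
    have : Real.sqrt s ≠ 0 := by positivity
    show Real.sqrt s * ‖z' s‖ * (Real.sqrt s)⁻¹ = ‖z' s‖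
    field_simp
  have hfsq : ∫ s, f s ^ (2:ℝ) ∂μ' = ∫ s, f s ^ (2:ℕ) ∂μ' := by
    refine integral_congr_ae (ae_of_all _ fun s => ?_)
    show f s ^ (2:ℝ) = f s ^ (2:ℕ)
    rw [← Real.rpow_natCast (f s) 2]; norm_num
  have hgsq : ∫ s, g s ^ (2:ℝ) ∂μ' = ∫ s, g s ^ (2:ℕ) ∂μ' := by
    refine integral_congr_ae (ae_of_all _ fun s => ?_)
    show g s ^ (2:ℝ) = g s ^ (2:ℕ)
    rw [← Real.rpow_natCast (g s) 2]; norm_num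
  set A := ∫ s, f s ^ (2:ℕ) ∂μ' with hA
  have hA0 : 0 ≤ A := integral_nonneg fun s => sq_nonneg _
  have hAK : A ≤ K := by
    have : A = ∫ s in Ioc t (t + h), s * ‖z' s‖ ^ 2 := by
      refine setIntegral_congr_fun measurableSet_Ioc fun s hs => ?_
      have hs0 : (0:ℝ) ≤ s := (lt_trans ht hs.1).le
      simp only [hf, mul_pow, Real.sq_sqrt hs0]
    rw [this, hK]
    refine setIntegral_mono_set hz2 ?_ (HasSubset.Subset.eventuallyLE hsub)
    refine (ae_restrict_iff' measurableSet_Ioo).2 (ae_of_all _ fun s hs => ?_)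
    exact mul_nonneg hs.1.le (sq_nonneg _)
  have hgL : ∫ s, g s ^ (2:ℕ) ∂μ' = L := by
    have e1 : ∫ s, g s ^ (2:ℕ) ∂μ' = ∫ s in Ioc t (t + h), 1 / s := by
      refine setIntegral_congr_fun measurableSet_Ioc fun s hs => ?_
      have hs0 : (0:ℝ) < s := lt_trans ht hs.1
      show (Real.sqrt s)⁻¹ ^ 2 = 1 / s
      rw [← Real.sqrt_inv, Real.sq_sqrt (by positivity), one_div]
    rw [e1, ← intervalIntegral.integral_of_le (by linarith : t ≤ t + h),
      integral_one_div]
    rw [uIcc_of_le (by linarith : t ≤ t + h)]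
    intro h0
    exact absurd h0.1 (not_le.2 ht)
  -- combine
  have hK0 : 0 ≤ K := by
    refine setIntegral_nonneg measurableSet_Ioo fun s hs => ?_
    exact mul_nonneg hs.1.le (sq_nonneg _)
  have key : ‖z (t + h) - z t‖ ≤ A ^ ((1:ℝ)/2) * L ^ ((1:ℝ)/2) := by
    calc ‖z (t + h) - z t‖ ≤ ∫ s in Ioc t (t + h), ‖z' s‖ := hnorm
      _ = ∫ s, f s * g s ∂μ' := hfg.symm
      _ ≤ (∫ s, f s ^ (2:ℝ) ∂μ') ^ ((1:ℝ)/2) * (∫ s, g s ^ (2:ℝ) ∂μ') ^ ((1:ℝ)/2) := holder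
      _ = A ^ ((1:ℝ)/2) * L ^ ((1:ℝ)/2) := by rw [hfsq, hgsq, hgL]
  have hprod : (A ^ ((1:ℝ)/2) * L ^ ((1:ℝ)/2)) ^ 2 = A * L := by
    rw [mul_pow, ← Real.rpow_natCast (A ^ ((1:ℝ)/2)) 2,
      ← Real.rpow_natCast (L ^ ((1:ℝ)/2)) 2,
      ← Real.rpow_mul hA0, ← Real.rpow_mul hL0]
    norm_num
  calc ‖z (t + h) - z t‖ ^ 2 ≤ (A ^ ((1:ℝ)/2) * L ^ ((1:ℝ)/2)) ^ 2 :=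
        pow_le_pow_left₀ (norm_nonneg _) key 2
    _ = A * L := hprod
    _ ≤ K * L := mul_le_mul_of_nonneg_right hAK hL0

/-- Fractional time regularity from a weighted bound on the time derivative:
if `z ∈ L²(0,T;E)` and `√t · z_t ∈ L²(0,T;E)`, then `z ∈ H^{1/2-α}(0,T;E)` (the
fractional norm being defined through finite differences), with
`‖z‖²_{H^{1/2-α}} ≤ ‖z‖²_{L²} + C_{α,T} ‖√t z_t‖²_{L²}`.  Here the double
finite-difference integral is expressed as a lower integral, so that the
inequality also encodes its finiteness. -/
theorem stmt7 (T : ℝ) (hT : 0 < T) (α : ℝ) (hα : α ∈ Set.Ioo (0:ℝ) (1/2)) :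
    ∃ C > 0,
      ∀ (E : Type) [instE : NormedAddCommGroup E] [instS : NormedSpace ℝ E]
        [instC : CompleteSpace E] (z z' : ℝ → E),
        (∀ t ∈ Set.Ioo (0:ℝ) T, HasDerivAt z (z' t) t) →
        IntegrableOn (fun t => ‖z t‖ ^ 2) (Set.Ioo 0 T) →
        IntegrableOn (fun t => t * ‖z' t‖ ^ 2) (Set.Ioo 0 T) →
        (ENNReal.ofReal (∫ t in Set.Ioo (0:ℝ) T, ‖z t‖ ^ 2)
          + ∫⁻ h in Set.Ioo (0:ℝ) T, ∫⁻ t in Set.Ioo (0:ℝ) (T - h),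
              ENNReal.ofReal (‖z (t + h) - z t‖ ^ 2 / h ^ (2 - 2*α)))
        ≤ ENNReal.ofReal (∫ t in Set.Ioo (0:ℝ) T, ‖z t‖ ^ 2)
          + ENNReal.ofReal (C * ∫ t in Set.Ioo (0:ℝ) T, t * ‖z' t‖ ^ 2) := by
  obtain ⟨hα0, hα12⟩ := hα
  have hα1 : α < 1 := by linarith
  have h1α : (0:ℝ) < 1 - α := by linarith
  have hTα : (0:ℝ) < T ^ α := Real.rpow_pos_of_pos hT α
  refine ⟨2 / (1 - α) * (T ^ α / α) * (T ^ α / α), by positivity, ?_⟩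
  intro E _ _ _ z z' hz hz1 hz2
  set K := ∫ t in Ioo (0:ℝ) T, t * ‖z' t‖ ^ 2 with hKdef
  have hK0 : 0 ≤ K :=
    setIntegral_nonneg measurableSet_Ioo fun s hs => mul_nonneg hs.1.le (sq_nonneg _)
  set M := 2 / (1 - α) * K with hMdef
  have hM0 : 0 ≤ M := mul_nonneg (by positivity) hK0
  refine add_le_add le_rfl ?_
  have hea : α - 1 + 1 = α := by ring
  calc ∫⁻ h in Ioo (0:ℝ) T, ∫⁻ t in Ioo (0:ℝ) (T - h),
          ENNReal.ofReal (‖z (t + h) - z t‖ ^ 2 / h ^ (2 - 2*α))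
      ≤ ∫⁻ h in Ioo (0:ℝ) T, ENNReal.ofReal ((M * (T ^ α / α)) * h ^ (α - 1)) := by
        refine lintegral_mono_ae ?_
        filter_upwards [ae_restrict_mem measurableSet_Ioo] with h hh
        have hTh : 0 < T - h := by linarith [hh.2]
        have hh0 : 0 < h := hh.1
        have hha : (0:ℝ) ≤ h ^ (α - 1) := Real.rpow_nonneg hh0.le _
        calc ∫⁻ t in Ioo (0:ℝ) (T - h),
                ENNReal.ofReal (‖z (t + h) - z t‖ ^ 2 / h ^ (2 - 2*α))
            ≤ ∫⁻ t in Ioo (0:ℝ) (T - h),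
                ENNReal.ofReal ((M * h ^ (α - 1)) * t ^ (α - 1)) := by
              refine lintegral_mono_ae ?_
              filter_upwards [ae_restrict_mem measurableSet_Ioo] with t htm
              have ht0 : 0 < t := htm.1
              have hth : t + h < T := by linarith [htm.2]
              refine ENNReal.ofReal_le_ofReal ?_
              -- real pointwise bound
              have hlog : Real.log ((t + h) / t) ≤ 2 / (1 - α) * (h / t) ^ (1 - α) := by
                have e : (t + h) / t = 1 + h / t := by field_simp
                rw [e]
                exact logBound h1α (by linarith) (by positivity)
              have hd := diffBound hz hz2 ht0 hh0 hth
              have hKL : ‖z (t + h) - z t‖ ^ 2 ≤ M * (h / t) ^ (1 - α) := by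
                calc ‖z (t + h) - z t‖ ^ 2 ≤ K * Real.log ((t + h) / t) := hd
                  _ ≤ K * (2 / (1 - α) * (h / t) ^ (1 - α)) :=
                      mul_le_mul_of_nonneg_left hlog hK0
                  _ = M * (h / t) ^ (1 - α) := by rw [hMdef]; ring
              have hpow : (0:ℝ) < h ^ (2 - 2*α) := Real.rpow_pos_of_pos hh0 _
              rw [div_le_iff₀ hpow]
              have e1 : (h / t) ^ (1 - α) = h ^ (1 - α) * t ^ (α - 1) := by
                rw [Real.div_rpow hh0.le ht0.le,
                  show α - 1 = -(1 - α) by ring, Real.rpow_neg ht0.le, div_eq_mul_inv]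
              have e2 : h ^ (α - 1) * h ^ (2 - 2*α) = h ^ (1 - α) := by
                rw [← Real.rpow_add hh0]; congr 1; ring
              calc ‖z (t + h) - z t‖ ^ 2 ≤ M * (h / t) ^ (1 - α) := hKL
                _ = M * h ^ (α - 1) * t ^ (α - 1) * h ^ (2 - 2*α) := by
                    rw [e1, ← e2]; ring
          _ = ENNReal.ofReal ((M * h ^ (α - 1)) * ((T - h) ^ (α - 1 + 1) / (α - 1 + 1))) :=
              lintAux hTh (mul_nonneg hM0 hha) (by linarith)
          _ ≤ ENNReal.ofReal ((M * (T ^ α / α)) * h ^ (α - 1)) := by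
              refine ENNReal.ofReal_le_ofReal ?_
              rw [hea]
              have hr : (T - h) ^ α ≤ T ^ α :=
                Real.rpow_le_rpow hTh.le (by linarith) hα0.le
              have h2 : (T - h) ^ α / α ≤ T ^ α / α := by gcongr
              calc M * h ^ (α - 1) * ((T - h) ^ α / α)
                  ≤ M * h ^ (α - 1) * (T ^ α / α) :=
                    mul_le_mul_of_nonneg_left h2 (mul_nonneg hM0 hha)
                _ = (M * (T ^ α / α)) * h ^ (α - 1) := by ring
    _ = ENNReal.ofReal ((M * (T ^ α / α)) * (T ^ (α - 1 + 1) / (α - 1 + 1))) :=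
        lintAux hT (mul_nonneg hM0 (by positivity)) (by linarith)
    _ = ENNReal.ofReal (2 / (1 - α) * (T ^ α / α) * (T ^ α / α) * K) := by
        rw [hea, hMdef]; ring_nf
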